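/- Let (b_n)_{n≥1} be a sequence of real numbers in [−1, 1] and let (c_n)_{n≥1} be a sequence of complex numbers with |c_n| < 1/n^n for all n ≥ 1. Then the series g(y) = Σ_{n=1}^{∞} c_n · ∏_{k=1}^{n} sin(y − b_k) converges for every y ∈ ℂ, converges uniformly on every bounded subset of ℂ, and the resulting function g : ℂ → ℂ is entire (analytic on all of ℂ). -/

import Mathlib

open Finset

lemma norm_sin_le_exp (z : ℂ) : ‖Complex.sin z‖ ≤ Real.exp ‖z‖ := by
  rw [Complex.sin]
  have h1 : ‖Complex.exp (-z * Complex.I)‖ ≤ Real.exp ‖z‖ := by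
    rw [Complex.norm_exp]
    apply Real.exp_le_exp.2
    calc (-z * Complex.I).re ≤ |(-z * Complex.I).re| := le_abs_self _
      _ ≤ ‖-z * Complex.I‖ := Complex.abs_re_le_norm _
      _ = ‖z‖ := by simp [map_mul]
  have h2 : ‖Complex.exp (z * Complex.I)‖ ≤ Real.exp ‖z‖ := by
    rw [Complex.norm_exp]
    apply Real.exp_le_exp.2
    calc (z * Complex.I).re ≤ |(z * Complex.I).re| := le_abs_self _
      _ ≤ ‖z * Complex.I‖ := Complex.abs_re_le_norm _
      _ = ‖z‖ := by simp [map_mul]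
  calc ‖(Complex.exp (-z * Complex.I) - Complex.exp (z * Complex.I)) * Complex.I / 2‖
      = ‖Complex.exp (-z * Complex.I) - Complex.exp (z * Complex.I)‖ / 2 := by
        simp [norm_div, norm_mul]
    _ ≤ (Real.exp ‖z‖ + Real.exp ‖z‖) / 2 := by
        gcongr; exact (norm_sub_le _ _).trans (add_le_add h1 h2)
    _ = Real.exp ‖z‖ := by ring

open Finset in
/-- Let `(b_n)_{n≥1}` be reals in `[-1, 1]` and `(c_n)_{n≥1}` complex numbers with
`|c_n| < 1/nⁿ`. Then `g(y) = Σ_{n≥1} c_n ∏_{k=1}^n sin (y - b_k)` converges for every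
`y : ℂ`, converges uniformly on every bounded subset of `ℂ`, and `g` is entire.
Here the index `n : ℕ` plays the role of `n + 1 ≥ 1`, so `b k` is `b_{k+1}` and
`c n` is `c_{n+1}`. -/
theorem stmt_16 (b : ℕ → ℝ) (hb : ∀ n, b n ∈ Set.Icc (-1 : ℝ) 1)
    (c : ℕ → ℂ) (hc : ∀ n : ℕ, ‖c n‖ < 1 / (n + 1 : ℝ) ^ (n + 1)) :
    (∀ y : ℂ, Summable fun n : ℕ =>
        c n * ∏ k ∈ range (n + 1), Complex.sin (y - (b k : ℂ))) ∧
    (∀ s : Set ℂ, Bornology.IsBounded s →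
      TendstoUniformlyOn
        (fun N : ℕ => fun y : ℂ =>
          ∑ n ∈ range N, c n * ∏ k ∈ range (n + 1), Complex.sin (y - (b k : ℂ)))
        (fun y : ℂ => ∑' n : ℕ, c n * ∏ k ∈ range (n + 1), Complex.sin (y - (b k : ℂ)))
        Filter.atTop s) ∧
    (∀ y : ℂ, AnalyticAt ℂ
      (fun y : ℂ => ∑' n : ℕ, c n * ∏ k ∈ range (n + 1), Complex.sin (y - (b k : ℂ))) y) := by
  set f : ℕ → ℂ → ℂ := fun n y => c n * ∏ k ∈ range (n + 1), Complex.sin (y - (b k : ℂ))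
    with hf
  set u : ℝ → ℕ → ℝ := fun R n => Real.exp (R + 1) ^ (n + 1) / (Nat.factorial (n + 1) : ℝ) with hu
  -- summability of the majorant
  have hsum : ∀ R : ℝ, Summable (u R) := by
    intro R
    have := (Real.summable_pow_div_factorial (Real.exp (R + 1))).comp_injective
      Nat.succ_injective
    simpa [hu, Function.comp_def] using this
  -- key bound
  have hbound : ∀ (R : ℝ) (n : ℕ) (y : ℂ), ‖y‖ ≤ R → ‖f n y‖ ≤ u R n := by
    intro R n y hy
    have hR : (0:ℝ) ≤ R + 1 := by
      have : (0:ℝ) ≤ ‖y‖ := norm_nonneg _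
      linarith
    have hprod : ‖∏ k ∈ range (n + 1), Complex.sin (y - (b k : ℂ))‖
        ≤ Real.exp (R + 1) ^ (n + 1) := by
      rw [norm_prod]
      calc ∏ k ∈ range (n + 1), ‖Complex.sin (y - (b k : ℂ))‖
          ≤ ∏ _k ∈ range (n + 1), Real.exp (R + 1) := by
            apply Finset.prod_le_prod (fun _ _ => norm_nonneg _)
            intro k _
            refine (norm_sin_le_exp _).trans (Real.exp_le_exp.2 ?_)
            have hbk := hb k
            have : ‖(b k : ℂ)‖ ≤ 1 := by
              rw [Complex.norm_real]
              rw [Set.mem_Icc] at hbk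
              exact abs_le.2 ⟨hbk.1, hbk.2⟩
            calc ‖y - (b k : ℂ)‖ ≤ ‖y‖ + ‖(b k : ℂ)‖ := norm_sub_le _ _
              _ ≤ R + 1 := add_le_add hy this
        _ = Real.exp (R + 1) ^ (n + 1) := by rw [Finset.prod_const, Finset.card_range]
    have hcn : ‖c n‖ ≤ 1 / ((n : ℝ) + 1) ^ (n + 1) := (hc n).le
    have hfact : ((Nat.factorial (n + 1)) : ℝ) ≤ ((n : ℝ) + 1) ^ (n + 1) := by
      have := Nat.factorial_le_pow (n + 1)
      exact_mod_cast this
    have hpow : (0:ℝ) < ((n : ℝ) + 1) ^ (n + 1) := by positivity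
    calc ‖f n y‖ = ‖c n‖ * ‖∏ k ∈ range (n + 1), Complex.sin (y - (b k : ℂ))‖ := by
          rw [hf, norm_mul]
      _ ≤ (1 / ((n : ℝ) + 1) ^ (n + 1)) * Real.exp (R + 1) ^ (n + 1) := by
          apply mul_le_mul hcn hprod (norm_nonneg _)
          positivity
      _ ≤ (1 / ((Nat.factorial (n + 1)) : ℝ)) * Real.exp (R + 1) ^ (n + 1) := by
          apply mul_le_mul_of_nonneg_right _ (by positivity)
          exact one_div_le_one_div_of_le (by exact_mod_cast Nat.factorial_pos (n + 1)) hfact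
      _ = u R n := by rw [hu]; ring
  -- pointwise summability
  have h1 : ∀ y : ℂ, Summable fun n : ℕ => f n y := by
    intro y
    exact Summable.of_norm_bounded (hsum ‖y‖) (fun n => hbound ‖y‖ n y le_rfl)
  -- uniform convergence on bounded sets
  have h2 : ∀ s : Set ℂ, Bornology.IsBounded s →
      TendstoUniformlyOn (fun N y => ∑ n ∈ range N, f n y)
        (fun y => ∑' n, f n y) Filter.atTop s := by
    intro s hs
    obtain ⟨R, hR⟩ := hs.subset_closedBall 0
    exact tendstoUniformlyOn_tsum_nat (hsum R) fun n y hy =>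
      hbound R n y (by simpa using mem_closedBall_iff_norm.1 (hR hy))
  refine ⟨h1, h2, ?_⟩
  intro y
  have hball : Bornology.IsBounded (Metric.ball y 1) := Metric.isBounded_ball
  have hdiff : DifferentiableOn ℂ (fun y => ∑' n, f n y) (Metric.ball y 1) := by
    apply TendstoLocallyUniformlyOn.differentiableOn
      ((h2 _ hball).tendstoLocallyUniformlyOn)
    · filter_upwards with N
      apply DifferentiableOn.fun_sum
      intro n _
      apply DifferentiableOn.const_mul
      apply DifferentiableOn.fun_finset_prod
      intro k _
      exact (Complex.differentiable_sin.comp (differentiable_id.sub_const _)).differentiableOn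
    · exact Metric.isOpen_ball
  exact hdiff.analyticAt (Metric.isOpen_ball.mem_nhds (Metric.mem_ball_self one_pos))
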